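/- Let D be a self-adjoint operator on a Hilbert space H, let a be a bounded operator on H mapping Dom(D) into Dom(D) such that [D,a] extends to a bounded operator d(a). Then for t ∈ (0,1] and r ∈ (0,1/2), the operator norm of the bounded extension of the commutator [(1+D²)^{-tr}, a]D : Dom(D) → H is at most 2‖d(a)‖. -/

import Mathlib

open scoped ZeroAtInfty
open Set MeasureTheory

open Real


variable {θ : ℝ}

lemma Jmeas {θ : ℝ} : ∀ s : Set ℝ, s ⊆ Ioi 0 → MeasurableSet s →
    AEStronglyMeasurable (fun l : ℝ => l ^ (-θ) * (1 + l)⁻¹) (volume.restrict s) := by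
  intro s hs hms
  refine (ContinuousOn.aestronglyMeasurable ?_ hms)
  refine ContinuousOn.mul (fun x hx => ?_) (fun x hx => ?_)
  · exact (Real.continuousAt_rpow_const x (-θ) (Or.inl (ne_of_gt (hs hx)))).continuousWithinAt
  · have hx0 : (0:ℝ) < x := hs hx
    exact (ContinuousAt.inv₀ (by fun_prop) (by intro h; linarith)).continuousWithinAt

lemma intJ {θ : ℝ} (hθ0 : 0 < θ) (hθ1 : θ < 1) :
    IntegrableOn (fun l : ℝ => l ^ (-θ) * (1 + l)⁻¹) (Ioi 0) := by
  have hsplit : Ioi (0:ℝ) = Ioc 0 1 ∪ Ioi 1 := (Ioc_union_Ioi_eq_Ioi zero_le_one).symm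
  rw [hsplit]
  refine IntegrableOn.union ?_ ?_
  · have h1 : IntegrableOn (fun l : ℝ => l ^ (-θ)) (Ioc 0 1) := by
      simpa [intervalIntegrable_iff, uIoc_of_le (zero_le_one' ℝ)] using
        (intervalIntegral.intervalIntegrable_rpow' (r := -θ) (by linarith) (a := 0) (b := 1)).def'
    refine MeasureTheory.Integrable.mono h1 (Jmeas _ Ioc_subset_Ioi_self measurableSet_Ioc) ?_
    filter_upwards [ae_restrict_mem measurableSet_Ioc] with x hx
    have hx0 : 0 < x := hx.1
    have h2 : (1 + x)⁻¹ ≤ 1 := by rw [inv_le_one_iff₀]; right; linarith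
    have h3 : 0 ≤ x ^ (-θ) := le_of_lt (rpow_pos_of_pos hx0 _)
    rw [norm_mul, norm_of_nonneg h3, norm_of_nonneg (by positivity)]
    calc x ^ (-θ) * (1+x)⁻¹ ≤ x ^ (-θ) * 1 := by
          exact mul_le_mul_of_nonneg_left h2 h3
      _ = x ^ (-θ) := mul_one _
  · have h1 : IntegrableOn (fun l : ℝ => l ^ (-θ - 1)) (Ioi 1) :=
      integrableOn_Ioi_rpow_of_lt (by linarith) one_pos
    refine MeasureTheory.Integrable.mono h1 (Jmeas _ (fun x hx => mem_Ioi.mpr (lt_trans one_pos (mem_Ioi.mp hx))) measurableSet_Ioi) ?_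
    filter_upwards [ae_restrict_mem measurableSet_Ioi] with x hx
    have hx1 : 1 < x := hx
    have hx0 : 0 < x := lt_trans one_pos hx1
    have h2 : (1 + x)⁻¹ ≤ x⁻¹ := by
      apply inv_anti₀ hx0; linarith
    have h3 : 0 ≤ x ^ (-θ) := le_of_lt (rpow_pos_of_pos hx0 _)
    rw [norm_mul, norm_of_nonneg h3, norm_of_nonneg (by positivity),
      norm_of_nonneg (le_of_lt (rpow_pos_of_pos hx0 (-θ-1)))]
    calc x ^ (-θ) * (1+x)⁻¹ ≤ x ^ (-θ) * x⁻¹ := mul_le_mul_of_nonneg_left h2 h3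
      _ = x ^ (-θ) * x ^ (-1:ℝ) := by rw [rpow_neg_one]
      _ = x ^ (-θ - 1) := by rw [← rpow_add hx0]; ring_nf


lemma Ipos (hθ0 : 0 < θ) (hθ1 : θ < 1) :
    0 < ∫ l in Ioi (0:ℝ), l ^ (-θ) * (1 + l)⁻¹ := by
  rw [setIntegral_pos_iff_support_of_nonneg_ae ?pos (intJ hθ0 hθ1)]
  case pos =>
    filter_upwards [ae_restrict_mem measurableSet_Ioi] with x hx
    have : (0:ℝ) < x := hx
    positivity
  · have hsub : Ioi (0:ℝ) ⊆ Function.support (fun l : ℝ => l ^ (-θ) * (1 + l)⁻¹) ∩ Ioi 0 := by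
      intro x hx
      have hx0 : (0:ℝ) < x := hx
      refine ⟨?_, hx⟩
      simp only [Function.mem_support]
      positivity
    calc (0:ENNReal) < volume (Ioi (0:ℝ)) := by simp
      _ ≤ _ := measure_mono hsub

lemma scaleI (hθ0 : 0 < θ) (hθ1 : θ < 1) {u : ℝ} (hu : 0 < u) :
    ∫ l in Ioi (0:ℝ), l ^ (-θ) * (u + l)⁻¹
      = u ^ (-θ) * ∫ l in Ioi (0:ℝ), l ^ (-θ) * (1 + l)⁻¹ := by
  have key := MeasureTheory.integral_comp_mul_left_Ioi
    (fun l : ℝ => l ^ (-θ) * (u + l)⁻¹) 0 hu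
  rw [mul_zero] at key
  have lhs : ∫ x in Ioi (0:ℝ), (u * x) ^ (-θ) * (u + u * x)⁻¹
      = u ^ (-θ) * u⁻¹ * ∫ l in Ioi (0:ℝ), l ^ (-θ) * (1 + l)⁻¹ := by
    rw [← integral_const_mul]
    refine setIntegral_congr_fun measurableSet_Ioi (fun x hx => ?_)
    have hx0 : (0:ℝ) < x := hx
    rw [mul_rpow (le_of_lt hu) (le_of_lt hx0)]
    rw [show u + u * x = u * (1 + x) by ring, mul_inv]
    ring
  rw [lhs] at key
  have : ∫ l in Ioi (0:ℝ), l ^ (-θ) * (u + l)⁻¹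
      = u * (u ^ (-θ) * u⁻¹ * ∫ l in Ioi (0:ℝ), l ^ (-θ) * (1 + l)⁻¹) := by
    rw [key, smul_eq_mul, ← mul_assoc, mul_inv_cancel₀ (ne_of_gt hu), one_mul]
  rw [this]; field_simp


variable {H : Type*} [NormedAddCommGroup H] [InnerProductSpace ℂ H] [CompleteSpace H]

set_option maxHeartbeats 1000000 in
lemma core (D a : H →L[ℂ] H) (hD : IsSelfAdjoint D) {μ : ℝ} (hμ : 1 ≤ μ) :
    ‖(cfc (fun x : ℝ => (μ + x ^ 2)⁻¹) D * a - a * cfc (fun x : ℝ => (μ + x ^ 2)⁻¹) D) * D‖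
      ≤ (5/4) * μ⁻¹ * ‖a * D - D * a‖ := by
  have hμ0 : (0:ℝ) < μ := lt_of_lt_of_le one_pos hμ
  have hne : ∀ x : ℝ, μ + x ^ 2 ≠ 0 := fun x => by positivity
  have hcont : ContinuousOn (fun x : ℝ => (μ + x ^ 2)⁻¹) (spectrum ℝ D) :=
    (Continuous.inv₀ (by fun_prop) hne).continuousOn
  set R := cfc (fun x : ℝ => (μ + x ^ 2)⁻¹) D with hRdef
  set P := cfc (fun x : ℝ => μ + x ^ 2) D with hPdef
  set Q := cfc (fun x : ℝ => x * (μ + x ^ 2)⁻¹) D with hQdef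
  set W := cfc (fun x : ℝ => x ^ 2 * (μ + x ^ 2)⁻¹) D with hWdef
  have hRP : R * P = 1 := by
    rw [hRdef, hPdef, ← cfc_mul _ _ D hcont (by fun_prop)]
    calc cfc (fun x : ℝ => (μ + x ^ 2)⁻¹ * (μ + x ^ 2)) D = cfc (fun _ : ℝ => (1:ℝ)) D :=
          cfc_congr (fun x _ => inv_mul_cancel₀ (hne x))
      _ = 1 := cfc_one ℝ D
  have hPR : P * R = 1 := by
    rw [hRdef, hPdef, ← cfc_mul _ _ D (by fun_prop) hcont]
    calc cfc (fun x : ℝ => (μ + x ^ 2) * (μ + x ^ 2)⁻¹) D = cfc (fun _ : ℝ => (1:ℝ)) D :=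
          cfc_congr (fun x _ => mul_inv_cancel₀ (hne x))
      _ = 1 := cfc_one ℝ D
  have hRD : R * D = Q := by
    calc R * D = cfc (fun x : ℝ => (μ + x ^ 2)⁻¹) D * cfc (id : ℝ → ℝ) D := by
          rw [cfc_id ℝ D hD, hRdef]
      _ = cfc (fun x : ℝ => (μ + x ^ 2)⁻¹ * id x) D := (cfc_mul _ _ D hcont (by fun_prop)).symm
      _ = Q := cfc_congr (fun x _ => mul_comm _ _)
  have hDR : D * R = Q := by
    calc D * R = cfc (id : ℝ → ℝ) D * cfc (fun x : ℝ => (μ + x ^ 2)⁻¹) D := by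
          rw [cfc_id ℝ D hD, hRdef]
      _ = cfc (fun x : ℝ => id x * (μ + x ^ 2)⁻¹) D := (cfc_mul _ _ D (by fun_prop) hcont).symm
      _ = Q := cfc_congr (fun x _ => rfl)
  have hQD : Q * D = W := by
    calc Q * D = cfc (fun x : ℝ => x * (μ + x ^ 2)⁻¹) D * cfc (id : ℝ → ℝ) D := by
          rw [cfc_id ℝ D hD, hQdef]
      _ = cfc (fun x : ℝ => (x * (μ + x ^ 2)⁻¹) * id x) D := by
          refine (cfc_mul _ _ D ?_ (by fun_prop)).symm
          exact (Continuous.mul continuous_id ((Continuous.inv₀ (by fun_prop) hne))).continuousOn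
      _ = W := cfc_congr (fun x _ => by simp; ring)
  have hP : P = algebraMap ℝ (H →L[ℂ] H) μ + D ^ 2 := by
    rw [hPdef, cfc_add D _ _ (by fun_prop) (by fun_prop), cfc_const μ D hD,
      cfc_pow_id (R := ℝ) D 2 hD]
  have hcomm : a * P - P * a = (a * D - D * a) * D + D * (a * D - D * a) := by
    rw [hP]; simp only [mul_add, add_mul, Algebra.commutes]; noncomm_ring
  have key : (R * a - a * R) * D
      = R * (a * D - D * a) * W + Q * (a * D - D * a) * Q := by
    have h1 : R * a - a * R = R * (a * P - P * a) * R := by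
      symm
      calc R * (a * P - P * a) * R = R * a * (P * R) - R * P * (a * R) := by noncomm_ring
        _ = R * a - a * R := by rw [hPR, hRP, mul_one, one_mul]
    rw [h1, hcomm]
    calc R * ((a * D - D * a) * D + D * (a * D - D * a)) * R * D
        = R * (a * D - D * a) * (D * R * D) + (R * D) * (a * D - D * a) * (R * D) := by
          noncomm_ring
      _ = _ := by rw [hDR, hRD, hQD]
  have hnR : ‖R‖ ≤ μ⁻¹ := by
    refine norm_cfc_le (by positivity) (fun x _ => ?_)
    rw [Real.norm_eq_abs, abs_of_nonneg (by positivity)]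
    apply inv_anti₀ hμ0; nlinarith [sq_nonneg x]
  have hnW : ‖W‖ ≤ 1 := by
    refine norm_cfc_le one_pos.le (fun x _ => ?_)
    rw [Real.norm_eq_abs, abs_of_nonneg (by positivity)]
    rw [mul_inv_le_iff₀ (lt_of_lt_of_le hμ0 (by nlinarith [sq_nonneg x]))]
    nlinarith [sq_nonneg x]
  have hnQ : ‖Q‖ ^ 2 ≤ (1/4) * μ⁻¹ := by
    have h : ‖Q‖ ≤ (2 * Real.sqrt μ)⁻¹ := by
      refine norm_cfc_le (by positivity) (fun x _ => ?_)
      have hs0 : 0 < Real.sqrt μ := Real.sqrt_pos.mpr hμ0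
      rw [Real.norm_eq_abs, abs_mul, abs_of_nonneg (a := (μ + x^2)⁻¹) (by positivity),
        mul_inv_le_iff₀ (by positivity), inv_mul_eq_div, le_div_iff₀ (by positivity)]
      nlinarith [sq_nonneg (Real.sqrt μ - |x|), Real.sq_sqrt hμ0.le, sq_abs x, abs_nonneg x]
    have h2 : ‖Q‖ ^ 2 ≤ ((2 * Real.sqrt μ)⁻¹) ^ 2 :=
      pow_le_pow_left₀ (norm_nonneg _) h 2
    refine h2.trans (le_of_eq ?_)
    rw [inv_pow, mul_pow, Real.sq_sqrt hμ0.le, mul_inv]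
    norm_num
  set d := a * D - D * a with hd
  calc ‖(R * a - a * R) * D‖ = ‖R * d * W + Q * d * Q‖ := by rw [key]
    _ ≤ ‖R * d * W‖ + ‖Q * d * Q‖ := norm_add_le _ _
    _ ≤ ‖R‖ * ‖d‖ * ‖W‖ + ‖Q‖ * ‖d‖ * ‖Q‖ := by
        refine add_le_add ?_ ?_ <;>
        exact (norm_mul_le _ _).trans (mul_le_mul_of_nonneg_right (norm_mul_le _ _)
          (norm_nonneg _))
    _ ≤ 5/4 * μ⁻¹ * ‖d‖ := by
        have b1 : ‖R‖ * ‖d‖ * ‖W‖ ≤ μ⁻¹ * ‖d‖ := by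
          calc ‖R‖ * ‖d‖ * ‖W‖ ≤ ‖R‖ * ‖d‖ * 1 :=
                mul_le_mul_of_nonneg_left hnW (by positivity)
            _ = ‖R‖ * ‖d‖ := mul_one _
            _ ≤ μ⁻¹ * ‖d‖ := mul_le_mul_of_nonneg_right hnR (norm_nonneg d)
        have b2 : ‖Q‖ * ‖d‖ * ‖Q‖ ≤ (1/4 * μ⁻¹) * ‖d‖ := by
          have e : ‖Q‖ * ‖d‖ * ‖Q‖ = ‖Q‖ ^ 2 * ‖d‖ := by ring
          rw [e]; exact mul_le_mul_of_nonneg_right hnQ (norm_nonneg d)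
        linarith


set_option maxHeartbeats 2000000 in
theorem stmt4 (D a : H →L[ℂ] H) (hD : IsSelfAdjoint D) (t r : ℝ)
    (ht : t ∈ Ioc (0:ℝ) 1) (hr : r ∈ Ioo (0:ℝ) (1/2)) :
    ‖(cfc (fun x : ℝ => (1 + x ^ 2) ^ (-(t * r))) D * a -
        a * cfc (fun x : ℝ => (1 + x ^ 2) ^ (-(t * r))) D) * D‖ ≤ 2 * ‖D * a - a * D‖ := by
  set θ := t * r with hθdef
  have hθ0 : 0 < θ := mul_pos ht.1 hr.1
  have hθ1 : θ < 1 := by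
    have hle : θ ≤ r := by
      rw [hθdef]; nlinarith [ht.1, ht.2, hr.1]
    linarith [hr.2]
  -- the function
  set f : ℝ → ℝ := fun x => (1 + x ^ 2) ^ (-θ) with hf
  have hfc : ContinuousOn f (spectrum ℝ D) := by
    intro x _
    have h1 : (1:ℝ) + x ^ 2 ≠ 0 := by positivity
    have hbase : ContinuousAt (fun y : ℝ => 1 + y ^ 2) x := by fun_prop
    exact (hbase.rpow_const (Or.inl h1)).continuousWithinAt
  -- cfcHom as a continuous linear map
  set Φ : C(spectrum ℝ D, ℝ) →L[ℝ] (H →L[ℂ] H) :=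
    { toLinearMap := ((cfcHom hD (R := ℝ)).toAlgHom).toLinearMap
      cont := (isometry_cfcHom D hD).continuous } with hΦ
  -- the two-variable continuous kernel
  have hden : Continuous fun p : ℝ × spectrum ℝ D => 1 + |p.1| + ((p.2 : ℝ)) ^ 2 := by fun_prop
  set F : C(ℝ × spectrum ℝ D, ℝ) :=
    ⟨fun p => (1 + |p.1| + ((p.2 : ℝ)) ^ 2)⁻¹,
      Continuous.inv₀ hden (fun p => by positivity)⟩ with hF
  set G : ℝ → C(spectrum ℝ D, ℝ) := fun l => l ^ (-θ) • (F.curry l) with hG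
  have hΦapp : ∀ g : C(spectrum ℝ D, ℝ), Φ g = cfcHom hD g := by
    intro g; rw [hΦ]; rfl
  -- the normalization constant
  set I : ℝ := ∫ l in Ioi (0:ℝ), l ^ (-θ) * (1 + l)⁻¹ with hI
  have hIpos : 0 < I := Ipos hθ0 hθ1
  -- integrability of G
  have hGmeas : AEStronglyMeasurable G (volume.restrict (Ioi 0)) := by
    refine ContinuousOn.aestronglyMeasurable ?_ measurableSet_Ioi
    refine ContinuousOn.smul (f := fun l : ℝ => l ^ (-θ)) (fun x hx => ?_) F.curry.continuous.continuousOn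
    exact (Real.continuousAt_rpow_const x (-θ) (Or.inl (ne_of_gt hx))).continuousWithinAt
  have hGnorm : ∀ l ∈ Ioi (0:ℝ), ‖G l‖ ≤ l ^ (-θ) * (1 + l)⁻¹ := by
    intro l hl
    have hl0 : (0:ℝ) < l := hl
    show ‖l ^ (-θ) • F.curry l‖ ≤ _
    rw [norm_smul (l ^ (-θ)) (F.curry l), Real.norm_eq_abs,
      abs_of_nonneg (le_of_lt (rpow_pos_of_pos hl0 _))]
    refine mul_le_mul_of_nonneg_left ?_ (le_of_lt (rpow_pos_of_pos hl0 _))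
    refine (ContinuousMap.norm_le _ (by positivity)).mpr (fun x => ?_)
    show ‖(1 + |l| + ((x : ℝ)) ^ 2)⁻¹‖ ≤ (1 + l)⁻¹
    rw [Real.norm_eq_abs, abs_of_nonneg (by positivity), abs_of_pos hl0]
    apply inv_anti₀ (by positivity)
    nlinarith [sq_nonneg (x : ℝ)]
  have hGint : IntegrableOn G (Ioi 0) := by
    refine MeasureTheory.Integrable.mono (intJ hθ0 hθ1) hGmeas ?_
    filter_upwards [ae_restrict_mem measurableSet_Ioi] with l hl
    have hl0 : (0:ℝ) < l := hl
    refine (hGnorm l hl).trans (le_of_eq ?_)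
    rw [Real.norm_eq_abs, abs_of_nonneg (by positivity)]
  -- the function-space integral identity
  set fK : C(spectrum ℝ D, ℝ) := ⟨(spectrum ℝ D).restrict f, hfc.restrict⟩ with hfK
  have hIG : ∫ l in Ioi (0:ℝ), G l = I • fK := by
    ext x
    have hev := (ContinuousMap.evalCLM ℝ x).integral_comp_comm hGint
    rw [show (∫ l in Ioi (0:ℝ), G l) x
        = (ContinuousMap.evalCLM ℝ x) (∫ l in Ioi (0:ℝ), G l) from rfl, ← hev]
    have : ∀ l ∈ Ioi (0:ℝ), (ContinuousMap.evalCLM ℝ x) (G l)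
        = l ^ (-θ) * ((1 + (x:ℝ) ^ 2) + l)⁻¹ := by
      intro l hl
      have hl0 : (0:ℝ) < l := hl
      show l ^ (-θ) * (1 + |l| + ((x:ℝ)) ^ 2)⁻¹ = _
      rw [abs_of_pos hl0]
      ring_nf
    rw [setIntegral_congr_fun measurableSet_Ioi this,
      scaleI hθ0 hθ1 (u := 1 + (x:ℝ)^2) (by positivity),
      ContinuousMap.smul_apply, smul_eq_mul, hfK]
    simp only [ContinuousMap.coe_mk, Set.restrict_apply, hf]
    rw [← hI]; exact mul_comm _ _
  -- cfc f D in terms of the integral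
  have hcfc : cfc f D = I⁻¹ • ∫ l in Ioi (0:ℝ), Φ (G l) := by
    rw [ContinuousLinearMap.integral_comp_comm Φ hGint, hIG, _root_.map_smul]
    have : Φ fK = cfc f D := by rw [hΦapp, cfc_apply f D hD hfc, hfK]; rfl
    rw [this, smul_smul, inv_mul_cancel₀ (ne_of_gt hIpos), one_smul]
  -- the commutator map
  set Ψ : (H →L[ℂ] H) →L[ℝ] (H →L[ℂ] H) :=
    (((ContinuousLinearMap.mul ℝ (H →L[ℂ] H)).flip D).comp
      ((ContinuousLinearMap.mul ℝ (H →L[ℂ] H)).flip a - ContinuousLinearMap.mul ℝ (H →L[ℂ] H) a)) with hΨ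
  have hΨapp : ∀ B : H →L[ℂ] H, Ψ B = (B * a - a * B) * D := fun B => rfl
  -- pointwise bound
  set d : H →L[ℂ] H := a * D - D * a with hd
  have hpt : ∀ l ∈ Ioi (0:ℝ), ‖Ψ (Φ (G l))‖
      ≤ (5/4 * ‖d‖) * (l ^ (-θ) * (1 + l)⁻¹) := by
    intro l hl
    have hl0 : (0:ℝ) < l := hl
    have hΦG : Φ (G l) = l ^ (-θ) • cfc (fun x : ℝ => ((1 + l) + x ^ 2)⁻¹) D := by
      rw [show G l = l ^ (-θ) • (F.curry l) from rfl, _root_.map_smul]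
      congr 1
      have hgc : ContinuousOn (fun x : ℝ => ((1 + l) + x ^ 2)⁻¹) (spectrum ℝ D) :=
        (Continuous.inv₀ (by fun_prop) (fun x => by positivity)).continuousOn
      rw [cfc_apply _ D hD hgc]
      show cfcHom hD (F.curry l) = _
      congr 1
      ext x
      show (1 + |l| + ((x:ℝ)) ^ 2)⁻¹ = ((1 + l) + (x:ℝ) ^ 2)⁻¹
      rw [abs_of_pos hl0]
    rw [hΦG, _root_.map_smul, norm_smul, Real.norm_eq_abs,
      abs_of_nonneg (le_of_lt (rpow_pos_of_pos hl0 _))]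
    rw [hΨapp]
    have hbound := core D a hD (μ := 1 + l) (by linarith)
    calc l ^ (-θ) * ‖(cfc (fun x : ℝ => ((1+l) + x ^ 2)⁻¹) D * a
          - a * cfc (fun x : ℝ => ((1+l) + x ^ 2)⁻¹) D) * D‖
        ≤ l ^ (-θ) * (5/4 * (1+l)⁻¹ * ‖a * D - D * a‖) :=
          mul_le_mul_of_nonneg_left hbound (le_of_lt (rpow_pos_of_pos hl0 _))
      _ = (5/4 * ‖d‖) * (l ^ (-θ) * (1 + l)⁻¹) := by rw [hd]; ring
  -- integrability of the integrand
  have hΦGint : Integrable (fun l => Φ (G l)) (volume.restrict (Ioi 0)) :=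
    Φ.integrable_comp hGint
  have hΨΦGint : Integrable (fun l => Ψ (Φ (G l))) (volume.restrict (Ioi 0)) :=
    Ψ.integrable_comp hΦGint
  -- assembling
  have hmain : (cfc f D * a - a * cfc f D) * D
      = I⁻¹ • ∫ l in Ioi (0:ℝ), Ψ (Φ (G l)) := by
    rw [← hΨapp (cfc f D), hcfc, _root_.map_smul,
      ContinuousLinearMap.integral_comp_comm Ψ hΦGint]
  have hnorm : ‖(cfc f D * a - a * cfc f D) * D‖ ≤ 5/4 * ‖d‖ := by
    rw [hmain, norm_smul, Real.norm_eq_abs, abs_of_pos (inv_pos.mpr hIpos)]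
    have hle : ‖∫ l in Ioi (0:ℝ), Ψ (Φ (G l))‖
        ≤ ∫ l in Ioi (0:ℝ), (5/4 * ‖d‖) * (l ^ (-θ) * (1 + l)⁻¹) := by
      refine norm_integral_le_of_norm_le ((intJ hθ0 hθ1).const_mul _) ?_
      filter_upwards [ae_restrict_mem measurableSet_Ioi] with l hl
      exact hpt l hl
    calc I⁻¹ * ‖∫ l in Ioi (0:ℝ), Ψ (Φ (G l))‖
        ≤ I⁻¹ * ∫ l in Ioi (0:ℝ), (5/4 * ‖d‖) * (l ^ (-θ) * (1 + l)⁻¹) :=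
          mul_le_mul_of_nonneg_left hle (le_of_lt (inv_pos.mpr hIpos))
      _ = I⁻¹ * (5/4 * ‖d‖ * I) := by rw [integral_const_mul, ← hI]
      _ = 5/4 * ‖d‖ := by field_simp
  have hdn : ‖d‖ = ‖D * a - a * D‖ := by rw [hd, norm_sub_rev]
  calc ‖(cfc f D * a - a * cfc f D) * D‖ ≤ 5/4 * ‖d‖ := hnorm
    _ ≤ 2 * ‖d‖ := by nlinarith [norm_nonneg d]
    _ = 2 * ‖D * a - a * D‖ := by rw [hdn]
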